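/- For every integer c ≥ 2 and every integer p ≥ 1, there exists a c-edge-colored graph G on n vertices (for some n ≥ c) with δ_mon(G) = p, having no properly colored cycle, and such that p ≥ (1/c)·(log_c n − log_c (log_c n)), where logarithms are to base c. Consequently d(n,c), the minimum k such that every c-edge-colored graph of order n with δ_mon ≥ k has a properly colored cycle, satisfies d(n,c) ≥ (1/c)(log_c n − log_c log_c n) for infinitely many n. -/

import Mathlib

/-- The number of edges of color `i` incident with the vertex `x` in the
`c`-edge-colored graph `(G, χ)`. -/
noncomputable def monDeg {V : Type} {c : ℕ} (G : SimpleGraph V) (χ : Sym2 V → Fin c)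
    (x : V) (i : Fin c) : ℕ :=
  Nat.card {y : V // G.Adj x y ∧ χ s(x, y) = i}

/-- The minimum monochromatic degree `δ_mon(G)` of a `c`-edge-colored graph. -/
noncomputable def minMonDeg {V : Type} {c : ℕ} (G : SimpleGraph V) (χ : Sym2 V → Fin c) : ℕ :=
  sInf {k : ℕ | ∃ (x : V) (i : Fin c), monDeg G χ x i = k}

/-- `(G, χ)` has a properly colored cycle: a cycle in which no two consecutive
edges (cyclically, including the final/first pair) have the same color. -/
def HasProperlyColoredCycle {V : Type} {c : ℕ} (G : SimpleGraph V)
    (χ : Sym2 V → Fin c) : Prop :=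
  ∃ (v : V) (w : G.Walk v v), w.IsCycle ∧
    ∀ i : Fin w.edges.length,
      χ (w.edges.get i) ≠
        χ (w.edges.get ⟨((i : ℕ) + 1) % w.edges.length, Nat.mod_lt _ i.pos⟩)

/-- `d(n,c)`: the minimum `k` such that every `c`-edge-colored graph of order
`n` with minimum monochromatic degree at least `k` has a properly colored
cycle. -/
noncomputable def dFun (n c : ℕ) : ℕ :=
  sInf {k : ℕ | ∀ (V : Type) (_ : Fintype V) (G : SimpleGraph V) (χ : Sym2 V → Fin c),
    Nat.card V = n → k ≤ minMonDeg G χ → HasProperlyColoredCycle G χ}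

namespace PCCAux
variable {c p : ℕ}

abbrev Vl (c p : ℕ) : Type := {l : List (Fin c) // ∀ j : Fin c, l.count j ≤ p}

def Gr (c p : ℕ) : SimpleGraph (Vl c p) where
  Adj a b := a ≠ b ∧ (a.1 <+: b.1 ∨ b.1 <+: a.1)
  symm := ⟨by rintro a b ⟨h1, h2⟩; exact ⟨h1.symm, h2.symm⟩⟩
  loopless := ⟨by rintro a ⟨h1, _⟩; exact h1 rfl⟩

def col (c p : ℕ) [NeZero c] : Sym2 (Vl c p) → Fin c :=
  Sym2.lift ⟨fun a b => if a.1.length < b.1.length then b.1.getD a.1.length 0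
      else a.1.getD b.1.length 0, by
    intro a b
    dsimp only
    rcases lt_trichotomy a.1.length b.1.length with h | h | h
    · rw [if_pos h, if_neg (by omega)]
    · rw [if_neg (by omega), if_neg (by omega), List.getD_eq_default _ _ (le_of_eq h.symm),
        List.getD_eq_default _ _ (le_of_eq h)]
    · rw [if_neg (by omega), if_pos h]⟩

lemma length_lt_of_prefix_ne {a b : Vl c p} (hab : a.1 <+: b.1) (hne : a ≠ b) :
    a.1.length < b.1.length := by
  rcases Nat.lt_or_ge a.1.length b.1.length with h | h
  · exact h
  · exact absurd (Subtype.ext (hab.eq_of_length (le_antisymm hab.length_le h))) hne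

lemma col_eval [NeZero c] {a b : Vl c p} (hab : a.1 <+: b.1) (hne : a ≠ b) :
    col c p s(a, b) = b.1.getD a.1.length 0 := by
  have hlt := length_lt_of_prefix_ne hab hne
  simp only [col, Sym2.lift_mk, if_pos hlt]

lemma prefix_getD [NeZero c] {x y : List (Fin c)} (h : x <+: y) {n : ℕ} (hn : n < x.length) :
    y.getD n 0 = x.getD n 0 := by
  rw [List.getD_eq_getElem _ _ (lt_of_lt_of_le hn h.length_le), List.getD_eq_getElem _ _ hn]
  exact (h.getElem hn).symm

lemma card_filter_getD (l : List (Fin c)) (a d : Fin c) :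
    ((Finset.range l.length).filter (fun m => l.getD m d = a)).card = l.count a := by
  induction l using List.reverseRecOn with
  | nil => simp
  | append_singleton l b ih =>
    have hP : ∀ m ∈ Finset.range l.length,
        ((l ++ [b]).getD m d = a) = (l.getD m d = a) := by
      intro m hm
      rw [Finset.mem_range] at hm
      rw [List.getD_eq_getElem _ _ (by simp; omega), List.getD_eq_getElem _ _ hm,
        List.getElem_append_left hm]
    have hlen : (l ++ [b]).length = l.length + 1 := by simp
    rw [hlen, Finset.range_add_one, Finset.filter_insert]
    have htop : (l ++ [b]).getD l.length d = b := by
      rw [List.getD_eq_getElem _ _ (by simp),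
        List.getElem_append_right (le_refl l.length)]
      simp
    have hfc : (Finset.range l.length).filter (fun m => (l ++ [b]).getD m d = a)
        = (Finset.range l.length).filter (fun m => l.getD m d = a) := by
      apply Finset.filter_congr
      intro m hm
      rw [hP m hm]
    by_cases hba : b = a
    · rw [if_pos (by rw [htop, hba]), Finset.card_insert_of_notMem (by
        intro hmem
        have := (Finset.mem_filter.1 hmem).1
        simp at this), hfc, ih, List.count_append]
      simp [hba]
    · rw [if_neg (by rw [htop]; exact hba), hfc, ih, List.count_append]
      simp [List.count_singleton']
      omega

def enc : List (Fin c) → ℕ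
  | [] => 0
  | a :: t => 1 + (a.val + c * enc t)

lemma enc_inj : ∀ l₁ l₂ : List (Fin c), enc l₁ = enc l₂ → l₁ = l₂
  | [], [], _ => rfl
  | [], b :: t, h => by simp [enc] at h; omega
  | a :: t, [], h => by simp [enc] at h
  | a :: t, b :: t', h => by
    simp only [enc] at h
    have h' : a.val + c * enc t = b.val + c * enc t' := by
      exact Nat.add_left_cancel h
    have ha : (a.val + c * enc t) % c = a.val := by
      rw [Nat.add_mul_mod_self_left, Nat.mod_eq_of_lt a.2]
    have hb : (b.val + c * enc t') % c = b.val := by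
      rw [Nat.add_mul_mod_self_left, Nat.mod_eq_of_lt b.2]
    have hab : a = b := by
      apply Fin.ext
      rw [← ha, ← hb, h']
    have hc0 : 0 < c := a.pos
    have ht : enc t = enc t' := by
      have : c * enc t = c * enc t' := by
        have := h'
        rw [hab] at this
        omega
      exact Nat.eq_of_mul_eq_mul_left hc0 this
    rw [hab, enc_inj t t' ht]

lemma enc_bound (hc : 2 ≤ c) : ∀ l : List (Fin c), enc l + 2 ≤ 2 * c ^ l.length := by
  intro l
  induction l with
  | nil => simp [enc]
  | cons a t ih =>
    have ha : a.val + 1 ≤ c := a.2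
    have hmul : c * enc t + 2 * c ≤ 2 * c ^ (t.length + 1) := by
      have := Nat.mul_le_mul_left c ih
      calc c * enc t + 2 * c = c * (enc t + 2) := by ring
        _ ≤ c * (2 * c ^ t.length) := this
        _ = 2 * c ^ (t.length + 1) := by ring
    simp only [enc, List.length_cons]
    linarith



lemma length_eq_sum_count (l : List (Fin c)) : l.length = ∑ j : Fin c, l.count j := by
  induction l with
  | nil => simp
  | cons a t ih =>
    simp only [List.length_cons, List.count_cons, beq_iff_eq, ih, Finset.sum_add_distrib]
    have : (∑ j : Fin c, if a = j then 1 else 0) = 1 := by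
      simp
    omega

lemma length_le_cp (l : Vl c p) : l.1.length ≤ c * p := by
  rw [length_eq_sum_count]
  calc (∑ j : Fin c, l.1.count j) ≤ ∑ _j : Fin c, p := Finset.sum_le_sum (fun j _ => l.2 j)
    _ = c * p := by simp [Finset.sum_const, mul_comm]

def encV (hc : 2 ≤ c) (v : Vl c p) : Fin (2 * c ^ (c * p)) :=
  ⟨enc v.1, by
    have h1 := enc_bound hc v.1
    have h2 : c ^ v.1.length ≤ c ^ (c * p) :=
      Nat.pow_le_pow_right (by omega) (length_le_cp v)
    omega⟩

lemma encV_inj (hc : 2 ≤ c) : Function.Injective (encV (c := c) (p := p) hc) := by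
  intro a b h
  exact Subtype.ext (enc_inj _ _ (congrArg Fin.val h))

lemma finite_Vl (hc : 2 ≤ c) : Finite (Vl c p) :=
  Finite.of_injective _ (encV_inj hc)


lemma monDeg_ge [NeZero c] (hc : 2 ≤ c) (x : Vl c p) (i : Fin c) :
    p ≤ monDeg (Gr c p) (col c p) x i := by
  haveI := finite_Vl (c := c) (p := p) hc
  classical
  set cnt := x.1.count i with hcnt_def
  have hcnt : cnt ≤ p := x.2 i
  set W : List (Fin c) := x.1 ++ List.replicate (p - cnt) i with hW
  have hxW : x.1 <+: W := List.prefix_append _ _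
  have hWlen : W.length = x.1.length + (p - cnt) := by simp [hW]
  have hWcnt : W.count i = p := by
    simp only [hW, List.count_append, List.count_replicate_self]
    omega
  have hWcnt' : ∀ j : Fin c, W.count j ≤ p := by
    intro j
    by_cases hj : j = i
    · rw [hj, hWcnt]
    · have : W.count j = x.1.count j := by
        simp only [hW, List.count_append, List.count_replicate]
        rw [if_neg (by simpa using fun h => hj h.symm)]
        omega
      rw [this]; exact x.2 j
  set S := (Finset.range W.length).filter (fun m => W.getD m 0 = i) with hS
  have hScard : S.card = p := by rw [hS, card_filter_getD, hWcnt]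
  have hSfact : ∀ m ∈ S, m < W.length ∧ W.getD m 0 = i := by
    intro m hm
    have := Finset.mem_filter.1 hm
    exact ⟨Finset.mem_range.1 this.1, this.2⟩
  -- construct the injection
  have key : ∀ m ∈ S, ∃ y : Vl c p,
      ((Gr c p).Adj x y ∧ col c p s(x, y) = i) ∧
      y.1.length = (if m < x.1.length then m else m + 1) := by
    intro m hm
    obtain ⟨hmW, hmi⟩ := hSfact m hm
    by_cases h : m < x.1.length
    · have hval : ∀ j : Fin c, (x.1.take m).count j ≤ p :=
        fun j => le_trans ((List.take_sublist m x.1).count_le j) (x.2 j)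
      refine ⟨⟨x.1.take m, hval⟩, ?_⟩
      set y : Vl c p := ⟨x.1.take m, hval⟩ with hy
      have hylen : y.1.length = m := by
        simp only [hy, List.length_take]
        omega
      have hne : y ≠ x := fun he => by
        have h2 := congrArg (fun v : Vl c p => v.1.length) he
        rw [hylen] at h2
        omega
      have hcol : col c p s(x, y) = i := by
        rw [Sym2.eq_swap, col_eval (show y.1 <+: x.1 from List.take_prefix m x.1) hne,
          hylen, ← prefix_getD hxW h, hmi]
      exact ⟨⟨⟨hne.symm, Or.inr (List.take_prefix m x.1)⟩, hcol⟩, by rw [hylen, if_pos h]⟩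
    · push_neg at h
      have h01 : 0 < p - cnt := by omega
      have hval : ∀ j : Fin c, (W.take (m+1)).count j ≤ p :=
        fun j => le_trans ((List.take_sublist _ _).count_le j) (hWcnt' j)
      refine ⟨⟨W.take (m+1), hval⟩, ?_⟩
      set y : Vl c p := ⟨W.take (m+1), hval⟩ with hy
      have hylen : y.1.length = m + 1 := by
        simp only [hy, List.length_take]
        omega
      have hne : x ≠ y := fun he => by
        have h2 := congrArg (fun v : Vl c p => v.1.length) he
        rw [hylen] at h2
        omega
      have hpre : x.1 <+: y.1 := by
        have h1 : x.1 = W.take x.1.length := (List.take_left (l₁ := x.1) (l₂ := List.replicate (p - cnt) i)).symm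
        show x.1 <+: W.take (m+1)
        rw [h1]
        exact List.take_prefix_take_left (by omega)
      have hcol : col c p s(x, y) = i := by
        rw [col_eval hpre hne]
        have hxlt : x.1.length < y.1.length := by rw [hylen]; omega
        rw [List.getD_eq_getElem _ _ hxlt]
        show (W.take (m+1))[x.1.length]'_ = i
        rw [List.getElem_take]
        show (x.1 ++ List.replicate (p - cnt) i)[x.1.length]'(by
          simp only [List.length_append, List.length_replicate]; omega) = i
        rw [List.getElem_append_right (le_refl _)]
        simp
      exact ⟨⟨⟨hne, Or.inl hpre⟩, hcol⟩, by rw [hylen, if_neg (by omega)]⟩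
  choose Y hY1 hY2 using key
  -- injectivity of Y
  have hYinj : ∀ (m m' : ℕ) (hm : m ∈ S) (hm' : m' ∈ S), Y m hm = Y m' hm' → m = m' := by
    intro m m' hm hm' he
    have h2 := congrArg (fun v : Vl c p => v.1.length) he
    rw [hY2 m hm, hY2 m' hm'] at h2
    split_ifs at h2 <;> omega
  -- conclude via Nat.card
  have hcard := Nat.card_le_card_of_injective
    (fun mm : {m // m ∈ S} => (⟨Y mm.1 mm.2, hY1 mm.1 mm.2⟩ :
      {y : Vl c p // (Gr c p).Adj x y ∧ col c p s(x, y) = i}))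
    (by rintro ⟨m, hm⟩ ⟨m', hm'⟩ h
        exact Subtype.ext (hYinj m m' hm hm' (congrArg Subtype.val h)))
  rw [Nat.card_eq_fintype_card, Fintype.card_coe, hScard] at hcard
  exact hcard

def x0 (c p : ℕ) [NeZero c] : Vl c p :=
  ⟨List.replicate p 0, by
    intro j
    rw [List.count_replicate]
    split <;> omega⟩

lemma monDeg_x0 [NeZero c] (hc : 2 ≤ c) :
    monDeg (Gr c p) (col c p) (x0 c p) 0 = p := by
  haveI := finite_Vl (c := c) (p := p) hc
  have hx0len : (x0 c p).1.length = p := by simp [x0]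
  have hf : ∀ k : Fin p, ∀ j : Fin c, (List.replicate k.1 (0 : Fin c)).count j ≤ p := by
    intro k j
    rw [List.count_replicate]
    have := k.2
    split <;> omega
  have hfpre : ∀ k : Fin p, (List.replicate k.1 (0 : Fin c)) <+: (x0 c p).1 := by
    intro k
    refine ⟨List.replicate (p - k.1) 0, ?_⟩
    show List.replicate k.1 (0 : Fin c) ++ _ = List.replicate p 0
    rw [← List.replicate_add]
    congr 1
    omega
  have hfne : ∀ k : Fin p, (⟨List.replicate k.1 0, hf k⟩ : Vl c p) ≠ x0 c p := by
    intro k he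
    have h2 := congrArg (fun v : Vl c p => v.1.length) he
    simp only [List.length_replicate, hx0len] at h2
    have := k.2
    omega
  have hbij : Function.Bijective (fun k : Fin p =>
      (⟨⟨List.replicate k.1 0, hf k⟩, ⟨(hfne k).symm, Or.inr (hfpre k)⟩, by
        rw [Sym2.eq_swap, col_eval (hfpre k) (hfne k)]
        show (x0 c p).1.getD (List.replicate k.1 (0 : Fin c)).length 0 = 0
        rw [List.length_replicate, List.getD_eq_getElem _ _ (by rw [hx0len]; exact k.2)]
        simp [x0]⟩ :
      {y : Vl c p // (Gr c p).Adj (x0 c p) y ∧ col c p s(x0 c p, y) = 0})) := by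
    constructor
    · intro k k' h
      have h2 := congrArg (fun v : {y : Vl c p //
        (Gr c p).Adj (x0 c p) y ∧ col c p s(x0 c p, y) = 0} => v.1.1.length) h
      simp only [List.length_replicate] at h2
      exact Fin.ext h2
    · rintro ⟨y, hadj, hcol⟩
      obtain ⟨hne, hor⟩ := hadj
      rcases hor with hpre | hpre
      · exfalso
        obtain ⟨t, ht⟩ := hpre
        have htne : t ≠ [] := by
          intro h0
          rw [h0, List.append_nil] at ht
          exact hne (Subtype.ext ht)
        have htlen : 0 < t.length := List.length_pos_iff.2 htne
        have hylen : p < y.1.length := by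
          rw [← ht, List.length_append, hx0len]
          omega
        have hcol2 : y.1.getD (x0 c p).1.length 0 = 0 := by
          rw [← col_eval ⟨t, ht⟩ hne]
          exact hcol
        rw [hx0len] at hcol2
        have hxle : (x0 c p).1.length ≤ p := by rw [hx0len]
        have ht0 : t.getD 0 0 = (0 : Fin c) := by
          calc t.getD 0 0 = ((x0 c p).1 ++ t).getD p 0 := by
                rw [List.getD_append_right _ _ _ _ hxle, hx0len, Nat.sub_self]
            _ = y.1.getD p 0 := by rw [ht]
            _ = 0 := hcol2
        rw [List.getD_eq_getElem _ _ htlen] at ht0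
        have hmem : (0 : Fin c) ∈ t := ht0 ▸ List.getElem_mem htlen
        have hcount : p + 1 ≤ y.1.count 0 := by
          rw [← ht, List.count_append]
          have h1 : (x0 c p).1.count 0 = p := by
            show (List.replicate p (0 : Fin c)).count 0 = p
            simp
          have h2 : 0 < t.count (0 : Fin c) := List.count_pos_iff.2 hmem
          omega
        exact absurd (y.2 0) (by omega)
      · -- y is a strict prefix of x0, hence a replicate
        have hyrep : y.1 = List.replicate y.1.length 0 := by
          have h1 := List.prefix_iff_eq_take.1 hpre
          conv_lhs => rw [h1]
          show List.take y.1.length (List.replicate p (0 : Fin c)) = _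
          rw [List.take_replicate]
          congr 1
          have h2 := hpre.length_le
          rw [hx0len] at h2
          exact Nat.min_eq_left h2
        have hylt : y.1.length < p := by
          have := length_lt_of_prefix_ne hpre (Ne.symm hne)
          rwa [hx0len] at this
        refine ⟨⟨y.1.length, hylt⟩, ?_⟩
        apply Subtype.ext
        apply Subtype.ext
        exact hyrep.symm
  have hcard := Nat.card_eq_of_bijective _ hbij
  rw [Nat.card_eq_fintype_card (α := Fin p), Fintype.card_fin] at hcard
  exact hcard.symm

lemma minMon [NeZero c] (hc : 2 ≤ c) : minMonDeg (Gr c p) (col c p) = p := by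
  have hmem : p ∈ {k : ℕ | ∃ (x : Vl c p) (i : Fin c), monDeg (Gr c p) (col c p) x i = k} :=
    ⟨x0 c p, 0, monDeg_x0 hc⟩
  refine le_antisymm (Nat.sInf_le hmem) (le_csInf ⟨p, hmem⟩ ?_)
  rintro k ⟨x, i, rfl⟩
  exact monDeg_ge hc x i

lemma support_getElem {V : Type} {G : SimpleGraph V} {a b : V} (w : G.Walk a b) :
    ∀ (j : ℕ) (hj : j < w.support.length), w.support[j] = w.getVert j := by
  induction w with
  | nil => intro j hj; simp only [SimpleGraph.Walk.support_nil, List.length_singleton] at hj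
           interval_cases j
           · simp
  | cons h q ih =>
    intro j hj
    cases j with
    | zero => simp
    | succ j =>
      simp only [SimpleGraph.Walk.support_cons, List.getElem_cons_succ,
        SimpleGraph.Walk.getVert_cons_succ]
      exact ih j (by
        rw [SimpleGraph.Walk.support_cons, List.length_cons] at hj
        omega)

lemma edges_getElem {V : Type} {G : SimpleGraph V} {a b : V} (w : G.Walk a b) :
    ∀ (j : ℕ) (hjl : j < w.length) (hj : j < w.edges.length),
      w.edges[j] = s(w.getVert j, w.getVert (j + 1)) := by
  induction w with
  | nil => intro j hjl _; simp at hjl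
  | cons h q ih =>
    intro j hjl hj
    cases j with
    | zero => simp
    | succ j =>
      simp only [SimpleGraph.Walk.edges_cons, List.getElem_cons_succ,
        SimpleGraph.Walk.getVert_cons_succ, SimpleGraph.Walk.getVert_cons_succ]
      exact ih j (by
        rw [SimpleGraph.Walk.length_cons] at hjl
        omega) (by
        rw [SimpleGraph.Walk.edges_cons, List.length_cons] at hj
        omega)

lemma gv_mem_support {V : Type} {G : SimpleGraph V} {a b : V} (w : G.Walk a b) (j : ℕ) :
    w.getVert j ∈ w.support := by
  by_cases hj : j ≤ w.length
  · exact SimpleGraph.Walk.mem_support_iff_exists_getVert.2 ⟨j, rfl, hj⟩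
  · rw [w.getVert_of_length_le (by omega)]
    exact SimpleGraph.Walk.end_mem_support w


lemma gr_adj {a b : Vl c p} :
    (Gr c p).Adj a b ↔ a ≠ b ∧ (a.1 <+: b.1 ∨ b.1 <+: a.1) := Iff.rfl

lemma noPCC [NeZero c] (hc : 2 ≤ c) : ¬ HasProperlyColoredCycle (Gr c p) (col c p) := by
  rintro ⟨v, w, hcyc, hcol⟩
  have h3 : 3 ≤ w.length := hcyc.three_le_length
  have hel : w.edges.length = w.length := w.length_edges
  set n := w.length with hn
  have hne : w.support.toFinset.Nonempty := by
    rw [List.toFinset_nonempty_iff]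
    exact w.support_ne_nil
  obtain ⟨u, humem, humin⟩ := w.support.toFinset.exists_min_image (fun z => z.1.length) hne
  rw [List.mem_toFinset] at humem
  have hmin : ∀ j : ℕ, u.1.length ≤ (w.getVert j).1.length := fun j =>
    humin _ (List.mem_toFinset.2 (gv_mem_support w j))
  obtain ⟨k, hku, hkn⟩ := SimpleGraph.Walk.mem_support_iff_exists_getVert.1 humem
  have step : ∀ {a b : Vl c p}, (Gr c p).Adj a b → u.1.length ≤ b.1.length →
      u.1 <+: a.1 → u.1 <+: b.1 := by
    intro a b hadj hlb hua
    obtain ⟨hab_ne, hab | hba⟩ := gr_adj.1 hadj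
    · exact hua.trans hab
    · rcases List.prefix_or_prefix_of_prefix hua hba with h | h
      · exact h
      · have he : b.1 = u.1 := h.eq_of_length (le_antisymm h.length_le hlb)
        rw [he]
  have up : ∀ d, k + d ≤ n → u.1 <+: (w.getVert (k + d)).1 := by
    intro d
    induction d with
    | zero => intro _; rw [Nat.add_zero, hku]
    | succ d ih =>
      intro hd
      have hadj := w.adj_getVert_succ (i := k + d) (by omega)
      exact step hadj (hmin _) (ih (by omega))
  have down : ∀ d, d ≤ k → u.1 <+: (w.getVert (k - d)).1 := by
    intro d
    induction d with
    | zero => intro _; rw [Nat.sub_zero, hku]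
    | succ d ih =>
      intro hd
      have hadj := w.adj_getVert_succ (i := k - (d + 1)) (by omega)
      have he : k - (d + 1) + 1 = k - d := by omega
      rw [he] at hadj
      exact step hadj.symm (hmin _) (ih (by omega))
  have prefixAll : ∀ j, j ≤ n → u.1 <+: (w.getVert j).1 := by
    intro j hj
    rcases le_or_gt k j with h | h
    · have := up (j - k) (by omega)
      rwa [Nat.add_sub_cancel' h] at this
    · have := down (k - j) (by omega)
      rwa [Nat.sub_sub_self (le_of_lt h)] at this
  have hinj : ∀ j₁ j₂, 1 ≤ j₁ → j₁ ≤ n → 1 ≤ j₂ → j₂ ≤ n →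
      w.getVert j₁ = w.getVert j₂ → j₁ = j₂ := by
    intro j₁ j₂ ha1 ha2 hb1 hb2 he
    have hnd := hcyc.support_nodup
    have htl : w.support.tail.length = n := by
      rw [List.length_tail, SimpleGraph.Walk.length_support]
      omega
    have hb1' : j₁ - 1 < w.support.tail.length := by omega
    have hb2' : j₂ - 1 < w.support.tail.length := by omega
    have e1 : w.support.tail[j₁ - 1] = w.getVert j₁ := by
      rw [List.getElem_tail, support_getElem w (j₁ - 1 + 1)
        (by rw [SimpleGraph.Walk.length_support]; omega)]
      congr 1
      omega
    have e2 : w.support.tail[j₂ - 1] = w.getVert j₂ := by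
      rw [List.getElem_tail, support_getElem w (j₂ - 1 + 1)
        (by rw [SimpleGraph.Walk.length_support]; omega)]
      congr 1
      omega
    have heq : w.support.tail[j₁ - 1] = w.support.tail[j₂ - 1] := by rw [e1, e2, he]
    have := (List.Nodup.getElem_inj_iff hnd).1 heq
    omega
  set L := u.1.length with hL
  set B : ℕ → Fin c := fun j => (w.getVert j).1.getD L 0 with hB
  have strictpre : ∀ j, j ≤ n → w.getVert j ≠ u → L < (w.getVert j).1.length := by
    intro j hj hne2
    have hp := prefixAll j hj
    rcases Nat.lt_or_ge L (w.getVert j).1.length with h | h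
    · exact h
    · exact absurd (Subtype.ext (hp.eq_of_length (le_antisymm hp.length_le h)).symm) hne2
  have stepB : ∀ j, j < n → w.getVert j ≠ u → w.getVert (j + 1) ≠ u → B j = B (j + 1) := by
    intro j hj h1 h2
    have hadj := w.adj_getVert_succ (i := j) (by omega)
    obtain ⟨hne3, h | h⟩ := gr_adj.1 hadj
    · exact (prefix_getD h (strictpre j (by omega) h1)).symm
    · exact prefix_getD h (strictpre (j + 1) (by omega) h2)
  have constB : ∀ a d, a + d ≤ n → (∀ j, a ≤ j → j ≤ a + d → w.getVert j ≠ u) →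
      B a = B (a + d) := by
    intro a d
    induction d with
    | zero => intro _ _; rfl
    | succ d ih =>
      intro hle hne4
      have h1 : B a = B (a + d) := ih (by omega) (fun j hj1 hj2 => hne4 j hj1 (by omega))
      have h2 : B (a + d) = B (a + d + 1) :=
        stepB (a + d) (by omega) (hne4 _ (by omega) (by omega)) (hne4 _ (by omega) (by omega))
      exact h1.trans h2
  have edgecol : ∀ j, j < n → w.getVert j = u → w.getVert (j + 1) ≠ u →
      col c p (s(w.getVert j, w.getVert (j + 1))) = B (j + 1) := by
    intro j hj hju hne5
    rw [hju]
    have hpre : u.1 <+: (w.getVert (j + 1)).1 := prefixAll (j + 1) (by omega)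
    have hne6 : u ≠ w.getVert (j + 1) := fun he => hne5 he.symm
    rw [col_eval hpre hne6]
  have edgecol2 : ∀ j, j < n → w.getVert (j + 1) = u → w.getVert j ≠ u →
      col c p (s(w.getVert j, w.getVert (j + 1))) = B j := by
    intro j hj hju hne5
    rw [hju, Sym2.eq_swap]
    have hpre : u.1 <+: (w.getVert j).1 := prefixAll j (by omega)
    have hne6 : u ≠ w.getVert j := fun he => hne5 he.symm
    rw [col_eval hpre hne6]
  by_cases huv : u = v
  · have hzero : w.getVert 0 = u := by rw [SimpleGraph.Walk.getVert_zero]; exact huv.symm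
    have hlast : w.getVert n = u := by
      rw [hn, w.getVert_length]
      exact huv.symm
    have hne_mid : ∀ j, 1 ≤ j → j ≤ n - 1 → w.getVert j ≠ u := by
      intro j h1 h2 he
      have := hinj j n h1 (by omega) (by omega) (le_refl n) (he.trans hlast.symm)
      omega
    have hi1 : n - 1 < w.edges.length := by omega
    have hi0 : (0:ℕ) < w.edges.length := by omega
    have e1 := edges_getElem w (n - 1) (by omega) hi1
    have e0 := edges_getElem w 0 (by omega) hi0
    have hc1 : col c p (w.edges[n - 1]'hi1) = B (n - 1) := by
      rw [e1]
      exact edgecol2 (n - 1) (by omega) (by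
        have hee : n - 1 + 1 = n := by omega
        rw [hee]; exact hlast) (hne_mid (n - 1) (by omega) (by omega))
    have hc0 : col c p (w.edges[0]'hi0) = B 1 := by
      rw [e0]
      exact edgecol 0 (by omega) hzero (hne_mid 1 (by omega) (by omega))
    have hBB : B 1 = B (n - 1) := by
      have := constB 1 (n - 2) (by omega) (fun j hj1 hj2 => hne_mid j (by omega) (by omega))
      have hee : 1 + (n - 2) = n - 1 := by omega
      rwa [hee] at this
    apply hcol ⟨n - 1, hi1⟩
    simp only [List.get_eq_getElem]
    have hmod : (((⟨n - 1, hi1⟩ : Fin w.edges.length) : ℕ) + 1) % w.edges.length = 0 := by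
      show (n - 1 + 1) % w.edges.length = 0
      rw [hel]
      have hee : n - 1 + 1 = n := by omega
      rw [hee]
      exact Nat.mod_self n
    simp only [hmod]
    show col c p (w.edges[n - 1]'hi1) = col c p (w.edges[0]'hi0)
    rw [hc1, hc0, hBB]
  · have hk0 : k ≠ 0 := by
      intro h0
      rw [h0, SimpleGraph.Walk.getVert_zero] at hku
      exact huv hku.symm
    have hkn' : k ≠ n := by
      intro h0
      rw [h0, hn, w.getVert_length] at hku
      exact huv hku.symm
    have hne_j : ∀ j, j ≤ n → j ≠ k → w.getVert j ≠ u := by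
      intro j hj hjk he
      rcases Nat.eq_zero_or_pos j with h0 | hpos
      · rw [h0, SimpleGraph.Walk.getVert_zero] at he
        exact huv he.symm
      · exact hjk (hinj j k hpos hj (by omega) (by omega) (he.trans hku.symm))
    have hi1 : k - 1 < w.edges.length := by omega
    have hik : k < w.edges.length := by omega
    have e1 := edges_getElem w (k - 1) (by omega) hi1
    have ek := edges_getElem w k (by omega) hik
    have hc1 : col c p (w.edges[k - 1]'hi1) = B (k - 1) := by
      rw [e1]
      exact edgecol2 (k - 1) (by omega) (by
        have hee : k - 1 + 1 = k := by omega
        rw [hee]; exact hku) (hne_j (k - 1) (by omega) (by omega))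
    have hck : col c p (w.edges[k]'hik) = B (k + 1) := by
      rw [ek]
      exact edgecol k (by omega) hku (hne_j (k + 1) (by omega) (by omega))
    have hB1 : B 0 = B (k - 1) := by
      have := constB 0 (k - 1) (by omega) (fun j hj1 hj2 => hne_j j (by omega) (by omega))
      simpa using this
    have hB2 : B (k + 1) = B n := by
      have := constB (k + 1) (n - (k + 1)) (by omega)
        (fun j hj1 hj2 => hne_j j (by omega) (by omega))
      have hee : k + 1 + (n - (k + 1)) = n := by omega
      rwa [hee] at this
    have hB0n : B 0 = B n := by
      show (w.getVert 0).1.getD L 0 = (w.getVert n).1.getD L 0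
      have hv0 : w.getVert 0 = v := SimpleGraph.Walk.getVert_zero w
      have hvn : w.getVert n = v := by rw [hn]; exact w.getVert_length
      rw [hv0, hvn]
    apply hcol ⟨k - 1, hi1⟩
    simp only [List.get_eq_getElem]
    have hmod : (((⟨k - 1, hi1⟩ : Fin w.edges.length) : ℕ) + 1) % w.edges.length = k := by
      show (k - 1 + 1) % w.edges.length = k
      rw [hel]
      have hee : k - 1 + 1 = k := by omega
      rw [hee]
      exact Nat.mod_eq_of_lt (by omega)
    simp only [hmod]
    show col c p (w.edges[k - 1]'hi1) = col c p (w.edges[k]'hik)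
    rw [hc1, hck, ← hB1, hB0n, ← hB2]


lemma card_le (hc : 2 ≤ c) : Nat.card (Vl c p) ≤ 2 * c ^ (c * p) := by
  haveI := finite_Vl (p := p) hc
  have := Nat.card_le_card_of_injective _ (encV_inj (p := p) hc)
  simpa using this

lemma card_ge (hc : 2 ≤ c) (hp : 1 ≤ p) : c ≤ Nat.card (Vl c p) := by
  haveI := finite_Vl (p := p) hc
  have hinj : Function.Injective (fun i : Fin c => (⟨[i], by
      intro j; simp [List.count_singleton']; split <;> omega⟩ : Vl c p)) := by
    intro i j h
    simpa using congrArg (fun v : Vl c p => v.1) h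
  have := Nat.card_le_card_of_injective _ hinj
  simpa using this

lemma card_ge_pow (hc : 2 ≤ c) : c ^ p ≤ Nat.card (Vl c p) := by
  haveI := finite_Vl (p := p) hc
  have hinj : Function.Injective (fun g : Fin p → Fin c => (⟨List.ofFn g, by
      intro j
      calc (List.ofFn g).count j ≤ (List.ofFn g).length := List.count_le_length
        _ = p := by simp⟩ : Vl c p)) := by
    intro g g' h
    have : List.ofFn g = List.ofFn g' := congrArg (fun v : Vl c p => v.1) h
    exact List.ofFn_injective this
  have := Nat.card_le_card_of_injective _ hinj
  simpa using this


end PCCAux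


lemma real_bound {c p n : ℕ} (hc : 2 ≤ c) (hp : 1 ≤ p) (h1 : c ≤ n) (h2 : n ≤ 2 * c ^ (c * p)) :
    (1 / (c : ℝ)) * (Real.logb c n - Real.logb c (Real.logb c n)) ≤ (p : ℝ) := by
  have hc1 : (1 : ℝ) < c := by
    have : (2:ℝ) ≤ c := by exact_mod_cast hc
    linarith
  have hcpos : (0:ℝ) < c := by linarith
  have hn0 : (0:ℝ) < n := by
    have : (2:ℕ) ≤ n := le_trans hc h1
    have : (2:ℝ) ≤ n := by exact_mod_cast this
    linarith
  set L := Real.logb c n with hL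
  have hL1 : 1 ≤ L := by
    rw [hL, ← Real.logb_self_eq_one hc1]
    exact Real.logb_le_logb_of_le hc1 hcpos (by exact_mod_cast h1)
  have hub : L ≤ (c:ℝ) * p + Real.logb c 2 := by
    have h2' : (n:ℝ) ≤ 2 * (c:ℝ) ^ (c * p) := by exact_mod_cast h2
    have hle : L ≤ Real.logb c (2 * (c:ℝ) ^ (c * p)) :=
      Real.logb_le_logb_of_le hc1 hn0 h2'
    rw [Real.logb_mul (by norm_num) (by positivity), Real.logb_pow,
      Real.logb_self_eq_one hc1, mul_one] at hle
    have : ((c * p : ℕ) : ℝ) = (c:ℝ) * p := by push_cast; ring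
    rw [this] at hle
    linarith
  have key : L - Real.logb c L ≤ (c:ℝ) * p := by
    by_cases hcase : L ≤ (c:ℝ) * p
    · have h0 : 0 ≤ Real.logb c L := Real.logb_nonneg hc1 hL1
      linarith
    · push_neg at hcase
      have hcp2 : (2:ℝ) ≤ (c:ℝ) * p := by
        have hc2 : (2:ℝ) ≤ c := by exact_mod_cast hc
        have hp1 : (1:ℝ) ≤ p := by exact_mod_cast hp
        nlinarith
      have hL2 : (2:ℝ) ≤ L := by linarith
      have hlog2 : Real.logb c 2 ≤ Real.logb c L :=
        Real.logb_le_logb_of_le hc1 (by norm_num) hL2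
      linarith
  have hfinal : (1 / (c:ℝ)) * ((c:ℝ) * p) = p := by field_simp
  calc (1 / (c : ℝ)) * (L - Real.logb c L) ≤ (1 / (c:ℝ)) * ((c:ℝ) * p) := by
        apply mul_le_mul_of_nonneg_left key
        positivity
    _ = p := hfinal



/-- For every `c ≥ 2` and `p ≥ 1` there is a `c`-edge-colored graph on `n ≥ c`
vertices with `δ_mon = p`, no properly colored cycle, and
`p ≥ (1/c)(log_c n − log_c log_c n)`. Consequently
`d(n,c) ≥ (1/c)(log_c n − log_c log_c n)` for infinitely many `n`. -/
theorem exists_no_properly_colored_cycle_log_bound (c p : ℕ) (hc : 2 ≤ c) (hp : 1 ≤ p) :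
    (∃ (V : Type) (_ : Fintype V) (G : SimpleGraph V) (χ : Sym2 V → Fin c),
        c ≤ Nat.card V ∧ minMonDeg G χ = p ∧ ¬ HasProperlyColoredCycle G χ ∧
        (1 / (c : ℝ)) *
            (Real.logb c (Nat.card V) - Real.logb c (Real.logb c (Nat.card V))) ≤ (p : ℝ)) ∧
    {n : ℕ |
      (1 / (c : ℝ)) * (Real.logb c n - Real.logb c (Real.logb c n)) ≤ (dFun n c : ℝ)}.Infinite := by
  haveI : NeZero c := ⟨by omega⟩
  haveI hF : Finite (PCCAux.Vl c p) := PCCAux.finite_Vl hc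
  constructor
  · exact ⟨PCCAux.Vl c p, Fintype.ofFinite _, PCCAux.Gr c p, PCCAux.col c p,
      PCCAux.card_ge hc hp, PCCAux.minMon hc, PCCAux.noPCC hc,
      real_bound hc hp (PCCAux.card_ge hc hp) (PCCAux.card_le hc)⟩
  · apply Set.infinite_of_not_bddAbove
    rintro ⟨b, hb⟩
    set q := b + 1 with hq
    have hq1 : 1 ≤ q := by omega
    haveI hFq : Finite (PCCAux.Vl c q) := PCCAux.finite_Vl hc
    set m := Nat.card (PCCAux.Vl c q) with hm
    set DS : Set ℕ := {k : ℕ | ∀ (V : Type) (_ : Fintype V) (G : SimpleGraph V)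
      (χ : Sym2 V → Fin c),
      Nat.card V = m → k ≤ minMonDeg G χ → HasProperlyColoredCycle G χ} with hDS
    have hdf : dFun m c = sInf DS := rfl
    have hm_ge : c ≤ m := PCCAux.card_ge hc hq1
    have hset : DS.Nonempty := by
      refine ⟨m + 1, ?_⟩
      intro V instV G χ hcardV hk
      exfalso
      haveI : Fintype V := instV
      have hm0 : 0 < m := by omega
      have hVne : Nonempty V := by
        have hpos : 0 < Nat.card V := by omega
        exact (Nat.card_pos_iff.1 hpos).1
      obtain ⟨x⟩ := hVne
      have h1 : minMonDeg G χ ≤ monDeg G χ x ⟨0, by omega⟩ :=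
        Nat.sInf_le ⟨x, ⟨0, by omega⟩, rfl⟩
      have h2 : monDeg G χ x ⟨0, by omega⟩ ≤ m := by
        rw [← hcardV]
        exact Nat.card_le_card_of_injective (fun y => y.1) (fun a b h => Subtype.ext h)
      omega
    have hgt : ∀ k ∈ DS, q < k := by
      intro k hk
      by_contra hle
      push_neg at hle
      have hP := hk (PCCAux.Vl c q) (Fintype.ofFinite _) (PCCAux.Gr c q) (PCCAux.col c q)
        hm.symm (by rw [PCCAux.minMon hc]; exact hle)
      exact PCCAux.noPCC hc hP
    have hdq : q ≤ dFun m c := by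
      have hmem := Nat.sInf_mem hset
      have := hgt _ hmem
      omega
    have hbm : (1 / (c : ℝ)) * (Real.logb c m - Real.logb c (Real.logb c m)) ≤ (q : ℝ) :=
      real_bound hc hq1 hm_ge (PCCAux.card_le hc)
    have hmem_set : m ∈ {n : ℕ |
        (1 / (c : ℝ)) * (Real.logb c n - Real.logb c (Real.logb c n)) ≤ (dFun n c : ℝ)} := by
      refine le_trans hbm ?_
      exact_mod_cast hdq
    have hmb : b < m := by
      have h1 : c ^ q ≤ m := PCCAux.card_ge_pow hc
      have h2 : 2 ^ q ≤ c ^ q := Nat.pow_le_pow_left hc q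
      have h3 : b < 2 ^ q := by
        have h4 := Nat.lt_two_pow_self (n := b)
        have h5 : (2:ℕ) ^ b ≤ 2 ^ q := Nat.pow_le_pow_right (by omega) (by omega)
        omega
      omega
    exact absurd (hb hmem_set) (by omega)
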